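/- Let 𝒴 and 𝒜 be finite sets, let q_{ia} > 0 for i ∈ 𝒴, a ∈ 𝒜 with Σ_{i,a} q_{ia} = 1, and for each (i,a) let p_{ia} be the density of the multivariate normal distribution N(μ_{ia}, Σ_{ia}) on ℝ^d with μ_{ia} ∈ ℝ^d and Σ_{ia} positive definite. Suppose that for all i, j ∈ 𝒴 and all a, a' ∈ 𝒜: (1) Σ_{ia}^{-1/2}(μ_{ia} − μ_{ja}) = Σ_{ia'}^{-1/2}(μ_{ia'} − μ_{ja'}); (2) Σ_{ia}^{1/2} Σ_{ja}^{-1} Σ_{ia}^{1/2} = Σ_{ia'}^{1/2} Σ_{ja'}^{-1} Σ_{ia'}^{1/2}; and (3) q_{ia}/q_{ja} = q_{ia'}/q_{ja'}. Then for every y ∈ 𝒴 and every a, a' ∈ 𝒜, the probability under X ~ N(μ_{ya}, Σ_{ya}) of the event {x ∈ ℝ^d : log(p_{ya}(x)/p_{ia}(x)) ≥ log(q_{ia}/q_{ya}) for all i ∈ 𝒴} equals the probability under X ~ N(μ_{ya'}, Σ_{ya'}) of the event {x ∈ ℝ^d : log(p_{ya'}(x)/p_{ia'}(x)) ≥ log(q_{ia'}/q_{ya'})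 for all i ∈ 𝒴}. In other words, the group-aware Bayes optimal classifier has equal class-y true positive rates across all groups (equal opportunity). -/

import Mathlib

open MeasureTheory Matrix

/-- Density of the multivariate normal distribution `N(μ, S)` on `ℝ^d`. -/
noncomputable def mvnPdf {d : ℕ} (μ : Fin d → ℝ) (S : Matrix (Fin d) (Fin d) ℝ)
    (x : Fin d → ℝ) : ℝ :=
  (2 * Real.pi) ^ (-(d : ℝ) / 2) * S.det ^ (-(1 : ℝ) / 2) *
    Real.exp (-(1 / 2) * ((x - μ) ⬝ᵥ (S⁻¹ *ᵥ (x - μ))))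

open scoped ComplexOrder in
noncomputable def Matrix.PosSemidef.sqrt {n : Type*} [Fintype n] [DecidableEq n] {𝕜 : Type*}
    [RCLike 𝕜] {A : Matrix n n 𝕜} (hA : A.PosSemidef) : Matrix n n 𝕜 :=
  hA.1.eigenvectorUnitary.1 * diagonal ((↑) ∘ (√·) ∘ hA.1.eigenvalues) *
    (star hA.1.eigenvectorUnitary : Matrix n n 𝕜)

open scoped ComplexOrder in
theorem Matrix.PosSemidef.posSemidef_sqrt {n : Type*} [Fintype n] [DecidableEq n] {𝕜 : Type*}
    [RCLike 𝕜] {A : Matrix n n 𝕜} (hA : A.PosSemidef) : hA.sqrt.PosSemidef := by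
  unfold Matrix.PosSemidef.sqrt
  have hD : (diagonal ((↑) ∘ (√·) ∘ hA.1.eigenvalues) : Matrix n n 𝕜).PosSemidef :=
    PosSemidef.diagonal (fun i => by simp [Real.sqrt_nonneg])
  have := hD.mul_mul_conjTranspose_same (hA.1.eigenvectorUnitary : Matrix n n 𝕜)
  simpa [Matrix.star_eq_conjTranspose] using this

open scoped ComplexOrder in
theorem Matrix.PosSemidef.sqrt_mul_self {n : Type*} [Fintype n] [DecidableEq n] {𝕜 : Type*}
    [RCLike 𝕜] {A : Matrix n n 𝕜} (hA : A.PosSemidef) : hA.sqrt * hA.sqrt = A := by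
  unfold Matrix.PosSemidef.sqrt
  conv_rhs => rw [hA.1.spectral_theorem]
  rw [Unitary.conjStarAlgAut_apply]
  have hU : (star hA.1.eigenvectorUnitary : Matrix n n 𝕜) * hA.1.eigenvectorUnitary.1 = 1 :=
    Unitary.coe_star_mul_self _
  have hDD : (diagonal ((↑) ∘ (√·) ∘ hA.1.eigenvalues) : Matrix n n 𝕜) *
      diagonal ((↑) ∘ (√·) ∘ hA.1.eigenvalues) = diagonal (RCLike.ofReal ∘ hA.1.eigenvalues) := by
    rw [diagonal_mul_diagonal]
    congr 1; funext i
    simp only [Function.comp_apply]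
    rw [← RCLike.ofReal_mul, Real.mul_self_sqrt (hA.eigenvalues_nonneg i)]
  calc _ = hA.1.eigenvectorUnitary.1 * (diagonal ((↑) ∘ (√·) ∘ hA.1.eigenvalues) *
      ((star hA.1.eigenvectorUnitary : Matrix n n 𝕜) * hA.1.eigenvectorUnitary.1) *
      diagonal ((↑) ∘ (√·) ∘ hA.1.eigenvalues)) * (star hA.1.eigenvectorUnitary : Matrix n n 𝕜) := by
        simp only [mul_assoc]
    _ = _ := by rw [hU, mul_one, hDD]

variable {d : ℕ}

lemma dot_aux (A M : Matrix (Fin d) (Fin d) ℝ) (u : Fin d → ℝ) :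
    (A *ᵥ u) ⬝ᵥ (M *ᵥ (A *ᵥ u)) = u ⬝ᵥ ((Aᵀ * M * A) *ᵥ u) := by
  calc (A *ᵥ u) ⬝ᵥ (M *ᵥ (A *ᵥ u))
      = (M *ᵥ (A *ᵥ u)) ⬝ᵥ (A *ᵥ u) := dotProduct_comm _ _
    _ = ((M *ᵥ (A *ᵥ u)) ᵥ* A) ⬝ᵥ u := dotProduct_mulVec _ _ _
    _ = (Aᵀ *ᵥ (M *ᵥ (A *ᵥ u))) ⬝ᵥ u := by rw [mulVec_transpose]
    _ = ((Aᵀ * M * A) *ᵥ u) ⬝ᵥ u := by rw [mulVec_mulVec, mulVec_mulVec]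
    _ = u ⬝ᵥ ((Aᵀ * M * A) *ᵥ u) := dotProduct_comm _ _

lemma mvnPdf_pos {μ : Fin d → ℝ} {S : Matrix (Fin d) (Fin d) ℝ} (hS : S.PosDef)
    (x : Fin d → ℝ) : 0 < mvnPdf μ S x := by
  unfold mvnPdf
  have h1 : (0:ℝ) < 2 * Real.pi := by positivity
  exact mul_pos (mul_pos (Real.rpow_pos_of_pos h1 _)
    (Real.rpow_pos_of_pos hS.det_pos _)) (Real.exp_pos _)

lemma mvnPdf_continuous {μ : Fin d → ℝ} {S : Matrix (Fin d) (Fin d) ℝ} :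
    Continuous (mvnPdf μ S) := by
  unfold mvnPdf
  have : Continuous fun x : Fin d → ℝ => (x - μ) ⬝ᵥ (S⁻¹ *ᵥ (x - μ)) := by
    unfold dotProduct mulVec dotProduct
    fun_prop
  fun_prop

lemma mvnPdf_comp (ν mu : Fin d → ℝ) (S A : Matrix (Fin d) (Fin d) ℝ) (w z : Fin d → ℝ)
    (hw : A *ᵥ w = mu - ν) :
    mvnPdf ν S (mu + A *ᵥ z) =
      (2 * Real.pi) ^ (-(d : ℝ) / 2) * S.det ^ (-(1 : ℝ) / 2) *
        Real.exp (-(1 / 2) * ((z + w) ⬝ᵥ ((Aᵀ * S⁻¹ * A) *ᵥ (z + w)))) := by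
  have h1 : (mu + A *ᵥ z) - ν = A *ᵥ (z + w) := by
    rw [mulVec_add, hw]; abel
  unfold mvnPdf
  rw [h1, dot_aux]

lemma single_group {𝒴 : Type*} [Fintype 𝒴] (y : 𝒴) (c : 𝒴 → ℝ) (μ : 𝒴 → Fin d → ℝ)
    (S : 𝒴 → Matrix (Fin d) (Fin d) ℝ) (hS : ∀ i, (S i).PosDef)
    (v : 𝒴 → Fin d → ℝ) (M : 𝒴 → Matrix (Fin d) (Fin d) ℝ) (ρ : 𝒴 → ℝ)
    (hv : ∀ i, v i = ((hS y).posSemidef.sqrt)⁻¹ *ᵥ (μ y - μ i))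
    (hM : ∀ i, M i = (hS y).posSemidef.sqrt * (S i)⁻¹ * (hS y).posSemidef.sqrt)
    (hρ : ∀ i, ρ i = (S y).det / (S i).det) :
    (∫ x in {x : Fin d → ℝ | ∀ i,
        Real.log (mvnPdf (μ y) (S y) x / mvnPdf (μ i) (S i) x) ≥ c i},
        mvnPdf (μ y) (S y) x) =
    ∫ z in {z : Fin d → ℝ | ∀ i,
        Real.log ((ρ i) ^ (-(1:ℝ)/2) *
          Real.exp (-(1/2) * ((z + v y) ⬝ᵥ (M y *ᵥ (z + v y)))
            + (1/2) * ((z + v i) ⬝ᵥ (M i *ᵥ (z + v i))))) ≥ c i},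
      (2 * Real.pi) ^ (-(d : ℝ) / 2) *
        Real.exp (-(1/2) * ((z + v y) ⬝ᵥ (M y *ᵥ (z + v y)))) := by
  classical
  set A : Matrix (Fin d) (Fin d) ℝ := (hS y).posSemidef.sqrt with hA
  have hAT : Aᵀ = A := by
    simpa [Matrix.IsSymm] using ((hS y).posSemidef.posSemidef_sqrt).isHermitian
  have hAA : A * A = S y := (hS y).posSemidef.sqrt_mul_self
  have hdet2 : A.det * A.det = (S y).det := by rw [← det_mul, hAA]
  have hdSy : (0:ℝ) < (S y).det := (hS y).det_pos
  have hAdet : A.det ≠ 0 := by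
    intro h; rw [h, mul_zero] at hdet2; exact hdSy.ne (by linarith)
  have hAunit : IsUnit A.det := isUnit_iff_ne_zero.2 hAdet
  have hAinv : ∀ u : Fin d → ℝ, A *ᵥ (A⁻¹ *ᵥ u) = u := by
    intro u; rw [mulVec_mulVec, mul_nonsing_inv _ hAunit, one_mulVec]
  set f : (Fin d → ℝ) → (Fin d → ℝ) := fun z => μ y + A *ᵥ z with hf
  have hf_surj : Function.Surjective f := by
    intro x; exact ⟨A⁻¹ *ᵥ (x - μ y), by simp [hf, hAinv]⟩
  have hf_inj : Function.Injective f := by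
    intro z1 z2 h
    have h2 : A *ᵥ z1 = A *ᵥ z2 := by
      have := h; simpa [hf] using this
    have := congrArg (fun u => A⁻¹ *ᵥ u) h2
    simpa [mulVec_mulVec, nonsing_inv_mul _ hAunit, one_mulVec] using this
  -- the event set is closed
  set T : Set (Fin d → ℝ) := {x | ∀ i,
      Real.log (mvnPdf (μ y) (S y) x / mvnPdf (μ i) (S i) x) ≥ c i} with hT
  have hT_closed : IsClosed T := by
    have : T = ⋂ i, {x : Fin d → ℝ | c i ≤
        Real.log (mvnPdf (μ y) (S y) x / mvnPdf (μ i) (S i) x)} := by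
      ext x; simp [hT, ge_iff_le]
    rw [this]
    refine isClosed_iInter fun i => isClosed_le continuous_const ?_
    refine Continuous.log (Continuous.div mvnPdf_continuous mvnPdf_continuous
      fun x => (mvnPdf_pos (hS i) x).ne') ?_
    exact fun x => div_ne_zero (mvnPdf_pos (hS y) x).ne' (mvnPdf_pos (hS i) x).ne'
  -- continuity of f
  set ℓ : (Fin d → ℝ) →L[ℝ] (Fin d → ℝ) :=
    LinearMap.toContinuousLinearMap (Matrix.toLin' A) with hℓ
  have hfeq : f = fun z => μ y + ℓ z := by
    funext z; simp [hf, hℓ, Matrix.toLin'_apply]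
  have hf_cont : Continuous f := by rw [hfeq]; exact continuous_const.add ℓ.continuous
  set E : Set (Fin d → ℝ) := f ⁻¹' T with hE
  have hE_meas : MeasurableSet E := (hT_closed.preimage hf_cont).measurableSet
  have hderiv : ∀ z ∈ E, HasFDerivWithinAt f ℓ E z := by
    intro z _
    have : HasFDerivAt (fun z => μ y + ℓ z) ℓ z := (ℓ.hasFDerivAt).const_add (μ y)
    rw [hfeq]
    exact this.hasFDerivWithinAt
  have hldet : ℓ.det = A.det := by
    rw [hℓ]
    rw [ContinuousLinearMap.det]
    simp [LinearMap.det_toLin']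
  have himg : f '' E = T := by rw [hE, Set.image_preimage_eq T hf_surj]
  -- change of variables
  have hcov := integral_image_eq_integral_abs_det_fderiv_smul (volume)
    hE_meas hderiv hf_inj.injOn (mvnPdf (μ y) (S y))
  rw [himg] at hcov
  rw [hcov]
  -- identify |A.det| * (det S y)^(-1/2)
  have habs : |A.det| = Real.sqrt ((S y).det) := by
    rw [← hdet2, Real.sqrt_mul_self_eq_abs]
  have hcancel : |A.det| * ((S y).det) ^ (-(1:ℝ)/2) = 1 := by
    rw [habs, Real.sqrt_eq_rpow, ← Real.rpow_add hdSy]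
    norm_num
  -- pdf values at f z
  have hpdf : ∀ i z, mvnPdf (μ i) (S i) (f z) =
      (2 * Real.pi) ^ (-(d : ℝ) / 2) * (S i).det ^ (-(1 : ℝ) / 2) *
        Real.exp (-(1/2) * ((z + v i) ⬝ᵥ (M i *ᵥ (z + v i)))) := by
    intro i z
    have hw : A *ᵥ v i = μ y - μ i := by rw [hv i]; exact hAinv _
    rw [hf]
    rw [mvnPdf_comp (μ i) (μ y) (S i) A (v i) z hw, hAT, ← hM i]
  have hratio : ∀ i z, mvnPdf (μ y) (S y) (f z) / mvnPdf (μ i) (S i) (f z) =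
      (ρ i) ^ (-(1:ℝ)/2) *
        Real.exp (-(1/2) * ((z + v y) ⬝ᵥ (M y *ᵥ (z + v y)))
          + (1/2) * ((z + v i) ⬝ᵥ (M i *ᵥ (z + v i)))) := by
    intro i z
    rw [hpdf y z, hpdf i z]
    have hc1 : (2 * Real.pi) ^ (-(d : ℝ) / 2) ≠ 0 := by positivity
    rw [mul_assoc, mul_assoc, mul_div_mul_left _ _ hc1, mul_div_mul_comm,
      ← Real.exp_sub, hρ i, Real.div_rpow hdSy.le (hS i).det_pos.le]
    ring_nf
  -- rewrite the integral over E
  have hEeq : E = {z : Fin d → ℝ | ∀ i,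
      Real.log ((ρ i) ^ (-(1:ℝ)/2) *
        Real.exp (-(1/2) * ((z + v y) ⬝ᵥ (M y *ᵥ (z + v y)))
          + (1/2) * ((z + v i) ⬝ᵥ (M i *ᵥ (z + v i))))) ≥ c i} := by
    ext z
    simp only [hE, Set.mem_preimage, hT, Set.mem_setOf_eq]
    constructor <;> intro h i <;> [rw [← hratio i z]; rw [hratio i z]] <;> exact h i
  rw [← hEeq]
  apply setIntegral_congr_fun hE_meas
  intro z _
  show |ℓ.det| • mvnPdf (μ y) (S y) (f z) =
    (2 * Real.pi) ^ (-(d : ℝ) / 2) *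
      Real.exp (-(1/2) * ((z + v y) ⬝ᵥ (M y *ᵥ (z + v y))))
  rw [hldet, hpdf y z, smul_eq_mul]
  calc |A.det| * ((2 * Real.pi) ^ (-(d : ℝ) / 2) * (S y).det ^ (-(1 : ℝ) / 2) *
        Real.exp (-(1/2) * ((z + v y) ⬝ᵥ (M y *ᵥ (z + v y)))))
      = (2 * Real.pi) ^ (-(d : ℝ) / 2) *
          Real.exp (-(1/2) * ((z + v y) ⬝ᵥ (M y *ᵥ (z + v y)))) *
          (|A.det| * (S y).det ^ (-(1 : ℝ) / 2)) := by ring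
    _ = _ := by rw [hcancel, mul_one]
/-- under the parametric conditions on the means, covariances, and
class-group probabilities, the group-aware Bayes optimal multi-class classifier,
whose prediction of class `y` in group `a` is the event
`{x | ∀ i, log(p_{ya}(x)/p_{ia}(x)) ≥ log(q_{ia}/q_{ya})}`, has equal class-`y`
true positive rates across all groups (equal opportunity): the probability of this
event under `N(μ_{ya}, Σ_{ya})` is the same for all groups `a`. -/
theorem statement1 {d : ℕ} {𝒴 𝒜 : Type*} [Fintype 𝒴] [Fintype 𝒜]
    (q : 𝒴 → 𝒜 → ℝ) (hq : ∀ i a, 0 < q i a) (hqsum : ∑ i, ∑ a, q i a = 1)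
    (μ : 𝒴 → 𝒜 → (Fin d → ℝ)) (S : 𝒴 → 𝒜 → Matrix (Fin d) (Fin d) ℝ)
    (hS : ∀ i a, (S i a).PosDef)
    (h1 : ∀ i j a a', ((hS i a).posSemidef.sqrt)⁻¹ *ᵥ (μ i a - μ j a) =
        ((hS i a').posSemidef.sqrt)⁻¹ *ᵥ (μ i a' - μ j a'))
    (h2 : ∀ i j a a',
        (hS i a).posSemidef.sqrt * (S j a)⁻¹ * (hS i a).posSemidef.sqrt =
        (hS i a').posSemidef.sqrt * (S j a')⁻¹ * (hS i a').posSemidef.sqrt)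
    (h3 : ∀ i j a a', q i a / q j a = q i a' / q j a') :
    ∀ y a a',
      (∫ x in {x : Fin d → ℝ | ∀ i,
          Real.log (mvnPdf (μ y a) (S y a) x / mvnPdf (μ i a) (S i a) x) ≥
            Real.log (q i a / q y a)}, mvnPdf (μ y a) (S y a) x) =
      (∫ x in {x : Fin d → ℝ | ∀ i,
          Real.log (mvnPdf (μ y a') (S y a') x / mvnPdf (μ i a') (S i a') x) ≥
            Real.log (q i a' / q y a')}, mvnPdf (μ y a') (S y a') x) := by
  intro y a a'
  -- determinant ratio is group-independent
  have hdetM : ∀ (b : 𝒜) (i : 𝒴),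
      ((hS y b).posSemidef.sqrt * (S i b)⁻¹ * (hS y b).posSemidef.sqrt).det =
        (S y b).det * ((S i b).det)⁻¹ := by
    intro b i
    rw [det_mul, det_mul, det_nonsing_inv]
    have hAA : (hS y b).posSemidef.sqrt * (hS y b).posSemidef.sqrt = S y b :=
      (hS y b).posSemidef.sqrt_mul_self
    have : (hS y b).posSemidef.sqrt.det * (hS y b).posSemidef.sqrt.det = (S y b).det := by
      rw [← det_mul, hAA]
    rw [mul_comm _ ((hS y b).posSemidef.sqrt.det), ← mul_assoc, this]
    simp [Ring.inverse_eq_inv']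
  have hρeq : ∀ i : 𝒴, (S y a).det / (S i a).det = (S y a').det / (S i a').det := by
    intro i
    have := congrArg Matrix.det (h2 y i a a')
    rw [hdetM a i, hdetM a' i] at this
    rw [div_eq_mul_inv, div_eq_mul_inv, this]
  have H1 := single_group y (fun i => Real.log (q i a / q y a)) (fun i => μ i a)
    (fun i => S i a) (fun i => hS i a)
    (fun i => ((hS y a).posSemidef.sqrt)⁻¹ *ᵥ (μ y a - μ i a))
    (fun i => (hS y a).posSemidef.sqrt * (S i a)⁻¹ * (hS y a).posSemidef.sqrt)
    (fun i => (S y a).det / (S i a).det)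
    (fun i => rfl) (fun i => rfl) (fun i => rfl)
  have H2 := single_group y (fun i => Real.log (q i a' / q y a')) (fun i => μ i a')
    (fun i => S i a') (fun i => hS i a')
    (fun i => ((hS y a).posSemidef.sqrt)⁻¹ *ᵥ (μ y a - μ i a))
    (fun i => (hS y a).posSemidef.sqrt * (S i a)⁻¹ * (hS y a).posSemidef.sqrt)
    (fun i => (S y a).det / (S i a).det)
    (fun i => h1 y i a a') (fun i => h2 y i a a') (fun i => hρeq i)
  rw [H1, H2]
  have hset : ∀ z : Fin d → ℝ, (∀ i,
      Real.log (((S y a).det / (S i a).det) ^ (-(1:ℝ)/2) *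
        Real.exp (-(1/2) * ((z + (((hS y a).posSemidef.sqrt)⁻¹ *ᵥ (μ y a - μ y a))) ⬝ᵥ
            (((hS y a).posSemidef.sqrt * (S y a)⁻¹ * (hS y a).posSemidef.sqrt) *ᵥ
              (z + (((hS y a).posSemidef.sqrt)⁻¹ *ᵥ (μ y a - μ y a)))))
          + (1/2) * ((z + (((hS y a).posSemidef.sqrt)⁻¹ *ᵥ (μ y a - μ i a))) ⬝ᵥ
            (((hS y a).posSemidef.sqrt * (S i a)⁻¹ * (hS y a).posSemidef.sqrt) *ᵥ
              (z + (((hS y a).posSemidef.sqrt)⁻¹ *ᵥ (μ y a - μ i a))))))) ≥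
        Real.log (q i a / q y a)) ↔ (∀ i,
      Real.log (((S y a).det / (S i a).det) ^ (-(1:ℝ)/2) *
        Real.exp (-(1/2) * ((z + (((hS y a).posSemidef.sqrt)⁻¹ *ᵥ (μ y a - μ y a))) ⬝ᵥ
            (((hS y a).posSemidef.sqrt * (S y a)⁻¹ * (hS y a).posSemidef.sqrt) *ᵥ
              (z + (((hS y a).posSemidef.sqrt)⁻¹ *ᵥ (μ y a - μ y a)))))
          + (1/2) * ((z + (((hS y a).posSemidef.sqrt)⁻¹ *ᵥ (μ y a - μ i a))) ⬝ᵥ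
            (((hS y a).posSemidef.sqrt * (S i a)⁻¹ * (hS y a).posSemidef.sqrt) *ᵥ
              (z + (((hS y a).posSemidef.sqrt)⁻¹ *ᵥ (μ y a - μ i a))))))) ≥
        Real.log (q i a' / q y a')) := by
    intro z
    refine forall_congr' fun i => ?_
    rw [h3 i y a a']
  congr 1
  exact congrArg _ (Set.ext fun z => hset z)
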